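/- arXiv:math/0209292 — 2 statements merged into one kernel-verified Lean document; each statement's English description precedes it below -/
import Mathlib

section
/- Let U be a free ultrafilter on ℕ and (A n) a sequence of unital complex C*-algebras. If b ∈ ∏_U A n is a projection (b* = b and b² = b), then there exists a projection q ∈ ℓ∞(A) (q* = q, q² = q) with π(q) = b. -/
open Filter Topology ENNReal

noncomputable section

section UltraCStar

variable (U : Ultrafilter ℕ) (A : ℕ → Type*) [∀ n, CStarAlgebra (A n)] [∀ n, Nontrivial (A n)]

/-- The limit along the ultrafilter `U` of the sequence of norms of `x ∈ ℓ∞(A)`. -/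
def ulim (x : lp A ∞) : ℝ := limUnder (U : Filter ℕ) fun n => ‖x n‖

variable {U A}

theorem exists_tendsto_norm (x : lp A ∞) :
    ∃ r : ℝ, Tendsto (fun n => ‖x n‖) (U : Filter ℕ) (𝓝 r) := by
  obtain ⟨C, hC⟩ := (lp.memℓp x).bddAbove
  have h : (↑(U.map fun n => ‖x n‖) : Filter ℝ) ≤ 𝓟 (Set.Icc 0 C) := by
    rw [Ultrafilter.coe_map, le_principal_iff, mem_map]
    exact univ_mem' fun n => ⟨norm_nonneg _, hC ⟨n, rfl⟩⟩
  obtain ⟨r, -, hr⟩ := isCompact_Icc.ultrafilter_le_nhds (U.map fun n => ‖x n‖) h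
  exact ⟨r, by rwa [Ultrafilter.coe_map] at hr⟩

theorem tendsto_ulim (x : lp A ∞) :
    Tendsto (fun n => ‖x n‖) (U : Filter ℕ) (𝓝 (ulim U A x)) :=
  tendsto_nhds_limUnder (exists_tendsto_norm x)

theorem ulim_eq {x : lp A ∞} {r : ℝ}
    (h : Tendsto (fun n => ‖x n‖) (U : Filter ℕ) (𝓝 r)) : ulim U A x = r :=
  tendsto_nhds_unique (tendsto_ulim x) h

theorem ulim_zero : ulim U A 0 = 0 :=
  ulim_eq <| by
    have : ∀ n, ‖(0 : lp A ∞) n‖ = (0 : ℝ) := fun n => by simp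
    simpa [this] using tendsto_const_nhds

theorem ulim_neg (x : lp A ∞) : ulim U A (-x) = ulim U A x :=
  ulim_eq <| (tendsto_ulim x).congr fun n => by simp

theorem ulim_add_le (x y : lp A ∞) : ulim U A (x + y) ≤ ulim U A x + ulim U A y := by
  refine le_of_tendsto_of_tendsto' (tendsto_ulim (x + y))
    ((tendsto_ulim x).add (tendsto_ulim y)) fun n => ?_
  calc ‖(x + y) n‖ = ‖x n + y n‖ := by simp
    _ ≤ ‖x n‖ + ‖y n‖ := norm_add_le _ _

theorem ulim_mul_le (x y : lp A ∞) : ulim U A (x * y) ≤ ulim U A x * ulim U A y := by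
  refine le_of_tendsto_of_tendsto' (tendsto_ulim (x * y))
    ((tendsto_ulim x).mul (tendsto_ulim y)) fun n => ?_
  calc ‖(x * y) n‖ = ‖x n * y n‖ := by simp
    _ ≤ ‖x n‖ * ‖y n‖ := norm_mul_le _ _

theorem ulim_smul (c : ℂ) (x : lp A ∞) : ulim U A (c • x) = ‖c‖ * ulim U A x :=
  ulim_eq <| ((tendsto_ulim x).const_mul ‖c‖).congr fun n => by
    simp [norm_smul]

theorem ulim_star (x : lp A ∞) : ulim U A (star x) = ulim U A x :=
  ulim_eq <| (tendsto_ulim x).congr fun n => by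
    simp [lp.coeFn_star]

variable (U A)

/-- The additive seminorm `x ↦ lim_U ‖x n‖` on `ℓ∞(A)`. -/
def upAddSeminorm : AddGroupSeminorm (lp A ∞) where
  toFun := ulim U A
  map_zero' := ulim_zero
  add_le' := ulim_add_le
  neg' := ulim_neg

/-- Type synonym of `ℓ∞(A)` carrying the seminorm `x ↦ lim_U ‖x n‖`. -/
def PreUP (_U : Ultrafilter ℕ) (A : ℕ → Type*) [∀ n, CStarAlgebra (A n)] : Type _ := lp A ∞

/-- The identity map `ℓ∞(A) → PreUP U A`. -/
def toPre : lp A ∞ → PreUP U A := id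

instance : Ring (PreUP U A) := (inferInstance : Ring (lp A ∞))

instance : StarRing (PreUP U A) := (inferInstance : StarRing (lp A ∞))

instance : SeminormedRing (PreUP U A) :=
  { (upAddSeminorm U A).toSeminormedAddCommGroup,
    (inferInstance : Ring (lp A ∞)) with
    norm_mul_le := ulim_mul_le }

instance : NormedAlgebra ℂ (PreUP U A) :=
  { (inferInstance : Algebra ℂ (lp A ∞)) with
    norm_smul_le := fun c x => le_of_eq (ulim_smul c x) }

instance : NormedStarGroup (PreUP U A) := ⟨fun x => le_of_eq (ulim_star x)⟩

/-- The ultraproduct `∏_U A n`, realized as the separation quotient of `ℓ∞(A)`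
equipped with the seminorm `x ↦ lim_U ‖x n‖`. -/
abbrev UProd : Type _ := SeparationQuotient (PreUP U A)

instance : Star (SeparationQuotient (PreUP U A)) where
  star := SeparationQuotient.lift
    (fun x : PreUP U A => SeparationQuotient.mk (star x)) fun x y h => by
      try dsimp only
      refine SeparationQuotient.mk_eq_mk.2 ?_
      rw [Metric.inseparable_iff, dist_eq_norm] at h ⊢
      rwa [← star_sub, norm_star]

theorem mk_star (x : PreUP U A) :
    (SeparationQuotient.mk (star x) : UProd U A) = star (SeparationQuotient.mk x) := rfl

instance : StarRing (SeparationQuotient (PreUP U A)) where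
  star_involutive := by
    refine SeparationQuotient.surjective_mk.forall.2 fun x => ?_
    rw [← mk_star, ← mk_star, star_star]
  star_mul := by
    intro a b
    obtain ⟨x, rfl⟩ := SeparationQuotient.surjective_mk a
    obtain ⟨y, rfl⟩ := SeparationQuotient.surjective_mk b
    rw [← SeparationQuotient.mk_mul, ← mk_star, ← mk_star, ← mk_star,
      ← SeparationQuotient.mk_mul, star_mul]
  star_add := by
    intro a b
    obtain ⟨x, rfl⟩ := SeparationQuotient.surjective_mk a
    obtain ⟨y, rfl⟩ := SeparationQuotient.surjective_mk b
    rw [← SeparationQuotient.mk_add, ← mk_star, ← mk_star, ← mk_star,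
      ← SeparationQuotient.mk_add, star_add]

/-- The quotient map `π : ℓ∞(A) → ∏_U A n`. -/
def uproj (x : lp A ∞) : UProd U A := SeparationQuotient.mk (toPre U A x)

variable {U A}

theorem uproj_add (x y : lp A ∞) : uproj U A (x + y) = uproj U A x + uproj U A y := rfl

theorem uproj_mul (x y : lp A ∞) : uproj U A (x * y) = uproj U A x * uproj U A y := rfl

theorem uproj_star (x : lp A ∞) : uproj U A (star x) = star (uproj U A x) := rfl

theorem uproj_one : uproj U A 1 = 1 := rfl

theorem norm_uproj (x : lp A ∞) : ‖uproj U A x‖ = ulim U A x := rfl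

end UltraCStar




/-- Piecewise linear: 0 for `t ≤ 1/4`, 1 for `t ≥ 3/4`. -/
def pf : ℝ → ℝ := fun t => min 1 (max 0 (2 * t - 1/2))

lemma pf_continuous : Continuous pf := by
  unfold pf; fun_prop

lemma pf_of_le {t : ℝ} (h : t ≤ 1/4) : pf t = 0 := by
  unfold pf
  rw [max_eq_left (by linarith), min_eq_right (by norm_num)]

lemma pf_of_ge {t : ℝ} (h : 3/4 ≤ t) : pf t = 1 := by
  unfold pf
  rw [min_eq_left (le_max_of_le_right (by linarith))]

lemma pf_nonneg (t : ℝ) : 0 ≤ pf t := le_min one_pos.le (le_max_left _ _)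

lemma pf_le_one (t : ℝ) : pf t ≤ 1 := min_le_left _ _

section Aux

variable {B : Type*} [CStarAlgebra B] [Nontrivial B] {a : B}

lemma spec_bound (ha : IsSelfAdjoint a) {t : ℝ} (ht : t ∈ spectrum ℝ a) :
    |t * t - t| ≤ ‖a * a - a‖ := by
  have key : a * a - a = cfc (fun t : ℝ => t * t - t) a := by
    rw [cfc_sub (fun t : ℝ => t * t) (fun t : ℝ => t) a,
      cfc_mul (fun t : ℝ => t) (fun t : ℝ => t) a, cfc_id' ℝ a]
  have hmem : t * t - t ∈ spectrum ℝ (a * a - a) := by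
    rw [key, cfc_map_spectrum (fun t : ℝ => t * t - t) a]
    exact ⟨t, ht, rfl⟩
  simpa using spectrum.norm_le_norm_of_mem hmem

lemma spec_dichotomy (ha : IsSelfAdjoint a) (hε : ‖a * a - a‖ < 3/16)
    {t : ℝ} (ht : t ∈ spectrum ℝ a) : t ≤ 1/4 ∨ 3/4 ≤ t := by
  by_contra h
  push_neg at h
  obtain ⟨h1, h2⟩ := h
  have hb := spec_bound ha ht
  rw [abs_le] at hb
  nlinarith [hb.1, hb.2]

lemma lift_aux (ha : IsSelfAdjoint a) (hε : ‖a * a - a‖ < 3/16) :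
    star (cfc pf a) = cfc pf a ∧ cfc pf a * cfc pf a = cfc pf a ∧
      ‖cfc pf a‖ ≤ 1 ∧ ‖cfc pf a - a‖ ≤ 4/3 * ‖a * a - a‖ := by
  refine ⟨(cfc_predicate pf a).star_eq, ?_, ?_, ?_⟩
  · rw [← cfc_mul pf pf a pf_continuous.continuousOn pf_continuous.continuousOn]
    refine cfc_congr fun t ht => ?_
    rcases spec_dichotomy ha hε ht with h | h
    · simp [pf_of_le h]
    · simp [pf_of_ge h]
  · exact norm_cfc_le zero_le_one fun t _ => by
      rw [Real.norm_eq_abs, abs_le]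
      exact ⟨by linarith [pf_nonneg t], pf_le_one t⟩
  · have key : cfc pf a - a = cfc (fun t : ℝ => pf t - t) a := by
      rw [cfc_sub pf (fun t : ℝ => t) a pf_continuous.continuousOn (by fun_prop),
        cfc_id' ℝ a]
    rw [key]
    refine norm_cfc_le (by positivity) fun t ht => ?_
    have hb := abs_le.1 (spec_bound ha ht)
    rcases spec_dichotomy ha hε ht with h | h
    · rw [pf_of_le h, Real.norm_eq_abs, abs_le]
      constructor <;> nlinarith [hb.1, hb.2]
    · rw [pf_of_ge h, Real.norm_eq_abs, abs_le]
      constructor <;> nlinarith [hb.1, hb.2]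

end Aux

/-- projections lift from the ultraproduct to `ℓ∞(A)`. -/
theorem stmt2 (U : Ultrafilter ℕ) (hU : (U : Filter ℕ) ≤ Filter.cofinite)
    (A : ℕ → Type*) [∀ n, CStarAlgebra (A n)] [∀ n, Nontrivial (A n)]
    (b : UProd U A) (hb_star : star b = b) (hb_idem : b * b = b) :
    ∃ q : lp A ∞, star q = q ∧ q * q = q ∧ uproj U A q = b := by
  
  obtain ⟨x, hx⟩ := SeparationQuotient.surjective_mk b
  set y : lp A ∞ := (2⁻¹ : ℂ) • (x + star x) with hy_def
  have hy_star : star y = y := by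
    rw [hy_def]
    show star ((2⁻¹ : ℂ) • (id (α := lp A ∞) x + star (id (α := lp A ∞) x))) = (2⁻¹ : ℂ) • (id (α := lp A ∞) x + star (id (α := lp A ∞) x))
    rw [star_smul, star_add, star_star]
    congr 1
    · simp [star_inv₀]
    · exact add_comm _ _
  have hy_proj : uproj U A y = b := by
    show SeparationQuotient.mk ((2⁻¹ : ℂ) • (x + star x)) = b
    have h1 : (SeparationQuotient.mk ((2⁻¹ : ℂ) • (x + star x)) : UProd U A)
        = (2⁻¹ : ℂ) • (SeparationQuotient.mk x + SeparationQuotient.mk (star x)) := by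
      rw [SeparationQuotient.mk_smul, SeparationQuotient.mk_add]
    rw [h1, mk_star, hx, hb_star, smul_add, ← add_smul]
    norm_num
  have hyy : uproj U A (y * y - y) = 0 := by
    have : uproj U A (y * y - y) = uproj U A (y * y) - uproj U A y :=
      SeparationQuotient.mk_sub _ _
    rw [this, uproj_mul, hy_proj, hb_idem, sub_self]
  have h0 : ulim U A (y * y - y) = 0 := by
    rw [← norm_uproj, hyy, norm_zero]
  have htend : Tendsto (fun n => ‖y n * y n - y n‖) (U : Filter ℕ) (𝓝 0) := by
    have := tendsto_ulim (U := U) (y * y - y)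
    rw [h0] at this
    refine this.congr fun n => ?_
    rfl
  have hsa : ∀ n, IsSelfAdjoint (y n) := fun n => by
    have h1 : (star y) n = y n := by rw [hy_star]
    rwa [lp.coeFn_star, Pi.star_apply] at h1
  classical
  set qs : ∀ n, A n := fun n =>
    if h : ‖y n * y n - y n‖ < 3/16 then cfc pf (y n) else 0 with hqs_def
  have hqs : ∀ n, ‖y n * y n - y n‖ < 3/16 → qs n = cfc pf (y n) := fun n h => dif_pos h
  have hq_norm : ∀ n, ‖qs n‖ ≤ 1 := by
    intro n
    by_cases h : ‖y n * y n - y n‖ < 3/16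
    · rw [hqs n h]
      exact (lift_aux (hsa n) h).2.2.1
    · simp [hqs_def, h]
  have hq_mem : Memℓp qs ∞ := memℓp_infty ⟨1, by rintro r ⟨n, rfl⟩; exact hq_norm n⟩
  set q : lp A ∞ := ⟨qs, hq_mem⟩ with hq_def
  have hq_apply : ∀ n, q n = qs n := fun n => rfl
  have hq_star : star q = q := by
    apply lp.ext
    funext n
    rw [lp.coeFn_star, Pi.star_apply, hq_apply]
    by_cases h : ‖y n * y n - y n‖ < 3/16
    · rw [hqs n h]
      exact (lift_aux (hsa n) h).1
    · simp [hqs_def, h]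
  have hq_idem : q * q = q := by
    apply lp.ext
    funext n
    have hmul : (q * q) n = q n * q n := by simp
    rw [hmul, hq_apply]
    by_cases h : ‖y n * y n - y n‖ < 3/16
    · rw [hqs n h]
      exact (lift_aux (hsa n) h).2.1
    · simp [hqs_def, h]
  refine ⟨q, hq_star, hq_idem, ?_⟩
  rw [← hy_proj]
  show SeparationQuotient.mk (toPre U A q) = SeparationQuotient.mk (toPre U A y)
  rw [SeparationQuotient.mk_eq_mk, Metric.inseparable_iff, dist_eq_norm]
  show ulim U A (q - y) = 0
  apply ulim_eq
  have hev : ∀ᶠ n in (U : Filter ℕ), ‖(q - y) n‖ ≤ 4/3 * ‖y n * y n - y n‖ := by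
    filter_upwards [htend.eventually_lt_const (by norm_num : (0:ℝ) < 3/16)] with n h
    have h1 : (q - y) n = q n - y n := by simp
    rw [h1, hq_apply, hqs n h]
    exact (lift_aux (hsa n) h).2.2.2
  have hg : Tendsto (fun n => 4/3 * ‖y n * y n - y n‖) (U : Filter ℕ) (𝓝 0) := by
    simpa using htend.const_mul (4/3 : ℝ)
  exact squeeze_zero' (Eventually.of_forall fun n => norm_nonneg _) hev hg
end
end

section
/- Let U be a free ultrafilter on ℕ and (A n) a sequence of finite-dimensional C*-algebras. If w ∈ ∏_U A n satisfies w* w = 1, then w w* = 1. Consequently, an ultraproduct of finite-dimensional C*-algebras contains no proper isometry, and a unital C*-algebra containing an element w with w* w = 1 and w w* ≠ 1 admits no injective unital *-homomorphism into ∏_U A n. -/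
open Filter Topology ENNReal

noncomputable section

universe u

theorem fd_mul_eq_one_comm {B : Type*} [CStarAlgebra B] [FiniteDimensional ℂ B]
    {a b : B} (h : a * b = 1) : b * a = 1 := by
  have key : LinearMap.mulLeft ℂ a * LinearMap.mulLeft ℂ b = 1 := by
    rw [Module.End.mul_eq_comp, ← LinearMap.mulLeft_mul, h, LinearMap.mulLeft_one]; rfl
  have key2 := mul_eq_one_comm.mp key
  have := congrArg (fun f : B →ₗ[ℂ] B => f 1) key2
  simpa using this

theorem fd_norm_eq {B : Type*} [CStarAlgebra B] [FiniteDimensional ℂ B]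
    (x : B) (h : ‖star x * x - 1‖ < 1) : ‖x * star x - 1‖ = ‖star x * x - 1‖ := by
  have h' : ‖1 - star x * x‖ < 1 := by rwa [norm_sub_rev]
  set v : Bˣ := Units.oneSub (1 - star x * x) h' with hv
  have hval : (v : B) = star x * x := by simp [hv, Units.val_oneSub]
  have hleft : ((v⁻¹ : Bˣ) * star x) * x = 1 := by
    rw [mul_assoc, ← hval]
    exact v.inv_mul
  have hright : x * ((v⁻¹ : Bˣ) * star x) = 1 := fd_mul_eq_one_comm hleft
  let u : Bˣ := ⟨x, (v⁻¹ : Bˣ) * star x, hright, hleft⟩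
  have hconj : (u : B) * (star x * x - 1) * (u⁻¹ : Bˣ) = x * star x - 1 := by
    have hinv : (u⁻¹ : Bˣ) = ((v⁻¹ : Bˣ) * star x : B) := rfl
    rw [hinv]
    show x * (star x * x - 1) * ((v⁻¹ : Bˣ) * star x) = x * star x - 1
    rw [mul_sub, mul_one, sub_mul, ← mul_assoc x (star x) x,
      mul_assoc (x * star x) x _, hright, mul_one]
  have hspec : spectrum ℂ (x * star x - 1) = spectrum ℂ (star x * x - 1) := by
    rw [← hconj]; exact spectrum.units_conjugate
  have h1 : IsSelfAdjoint (x * star x - 1) := ((IsSelfAdjoint.mul_star_self x).sub (IsSelfAdjoint.one B))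
  have h2 : IsSelfAdjoint (star x * x - 1) := ((IsSelfAdjoint.star_mul_self x).sub (IsSelfAdjoint.one B))
  have := h1.spectralRadius_eq_nnnorm
  rw [spectralRadius, hspec, ← spectralRadius, h2.spectralRadius_eq_nnnorm] at this
  exact_mod_cast congrArg ENNReal.toReal this.symm

/-- in an ultraproduct of finite-dimensional C*-algebras every isometry
(`w* w = 1`) is a unitary (`w w* = 1`); consequently a unital C*-algebra containing a
proper isometry admits no injective unital `*`-homomorphism into the ultraproduct. -/
theorem stmt13 (U : Ultrafilter ℕ) (hU : (U : Filter ℕ) ≤ Filter.cofinite)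
    (A : ℕ → Type*) [∀ n, CStarAlgebra (A n)] [∀ n, Nontrivial (A n)]
    [∀ n, FiniteDimensional ℂ (A n)] :
    (∀ w : UProd U A, star w * w = 1 → w * star w = 1) ∧
    (∀ (D : Type u) [CStarAlgebra D], ∀ v : D, star v * v = 1 → v * star v ≠ 1 →
      ∀ φ : D →⋆ₐ[ℂ] UProd U A, ¬ Function.Injective φ) := by
  have mk_eq_mk_iff : ∀ a b : lp A ∞, (uproj U A a = uproj U A b) ↔ ulim U A (a - b) = 0 := by
    intro a b
    rw [uproj, uproj, SeparationQuotient.mk_eq_mk, Metric.inseparable_iff, dist_eq_norm]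
    rfl
  have key : ∀ w : UProd U A, star w * w = 1 → w * star w = 1 := by
    intro w hw
    obtain ⟨x, rfl⟩ := SeparationQuotient.surjective_mk w
    let y : lp A ∞ := x
    have hmk : SeparationQuotient.mk x = uproj U A y := rfl
    have hx : uproj U A (star y * y) = uproj U A 1 := by
      rw [uproj_mul, uproj_star, uproj_one]
      exact hw
    rw [mk_eq_mk_iff] at hx
    have ht : Tendsto (fun n => ‖(star y * y - 1) n‖) (U : Filter ℕ) (𝓝 0) :=
      hx ▸ tendsto_ulim _
    have hcoe : ∀ n, (star y * y - 1) n = star (y n) * y n - 1 := fun n => by simp; rfl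
    have hcoe' : ∀ n, (y * star y - 1) n = y n * star (y n) - 1 := fun n => by simp; rfl
    have hev : ∀ᶠ n in (U : Filter ℕ),
        ‖(y * star y - 1) n‖ = ‖(star y * y - 1) n‖ := by
      filter_upwards [ht.eventually (eventually_lt_nhds zero_lt_one)] with n hn
      rw [hcoe, hcoe']
      exact fd_norm_eq (y n) (by rwa [hcoe] at hn)
    have ht' : Tendsto (fun n => ‖(y * star y - 1) n‖) (U : Filter ℕ) (𝓝 0) :=
      ht.congr' (hev.mono fun n h => h.symm)
    have h2 : uproj U A (y * star y) = uproj U A 1 := (mk_eq_mk_iff _ _).mpr (ulim_eq ht')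
    rw [uproj_mul, uproj_star, uproj_one] at h2
    exact h2
  refine ⟨key, ?_⟩
  intro D _ v hv hv' φ hinj
  apply hv'
  apply hinj
  have h1 : star (φ v) * φ v = 1 := by rw [← map_star, ← map_mul, hv, map_one]
  rw [map_mul, map_star, key _ h1, map_one]
end
end
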